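/- Let X be a Banach space, f : X → ℝ ∪ {+∞} proper l.s.c. convex, τ > 0, and suppose τ·d(x, S_f) ≤ [f(x)]₊ for all x ∈ X (with S_f := {x : f(x) ≤ 0} nonempty). Then for every x ∉ S_f one has inf_{‖h‖=1} d⁺f(x, h) ≤ −τ. -/
import Mathlib


open Filter Topology Metric Set

variable {X : Type*} [NormedAddCommGroup X] [NormedSpace ℝ X]

/-- difference quotient (f(x+th)-f(x))/t, with values in EReal -/
noncomputable def dquot (f : X → EReal) (x h : X) (t : ℝ) : EReal :=
  ((t⁻¹ : ℝ) : EReal) * (f (x + t • h) - f x)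

/-- directional derivative d⁺f(x,h) = inf_{t>0} (f(x+th)-f(x))/t -/
noncomputable def dirDeriv (f : X → EReal) (x h : X) : EReal :=
  ⨅ t : {t : ℝ // 0 < t}, dquot f x h t

/-- convexity for extended-real-valued functions -/
def EConvexOn (f : X → EReal) : Prop :=
  ∀ x y : X, ∀ a b : ℝ, 0 ≤ a → 0 ≤ b → a + b = 1 →
    f (a • x + b • y) ≤ (a : EReal) * f x + (b : EReal) * f y

/-- properness: somewhere finite and nowhere -∞ -/
def EProper (f : X → EReal) : Prop := (∃ x, f x ≠ ⊤) ∧ ∀ x, f x ≠ ⊥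

/-- inf of directional derivatives over the unit sphere -/
noncomputable def sphInf (f : X → EReal) (x : X) : EReal :=
  ⨅ h : {h : X // ‖h‖ = 1}, dirDeriv f x h

/-- global error bound modulus Er(f) -/
noncomputable def ErG (f : X → EReal) : EReal :=
  ⨅ x : {x : X // 0 < f x}, f x / ((Metric.infDist x.1 {y : X | f y ≤ 0} : ℝ) : EReal)

/-- local error bound modulus Er(f,x₀) -/
noncomputable def ErL (f : X → EReal) (x₀ : X) : EReal :=
  Filter.liminf (fun x => f x / ((Metric.infDist x {y : X | f y ≤ 0} : ℝ) : EReal))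
    (𝓝 x₀ ⊓ Filter.principal {x : X | 0 < f x})

/-- a global error bound forces inf_{‖h‖=1} d⁺f(x,h) ≤ -τ off the level set. -/
theorem stmt11 [CompleteSpace X] (f : X → EReal) (hconv : EConvexOn f)
    (hproper : EProper f) (hlsc : LowerSemicontinuous f)
    (hS : {x : X | f x ≤ 0}.Nonempty) (τ : ℝ) (hτ : 0 < τ)
    (heb : ∀ x : X, ((τ * Metric.infDist x {y : X | f y ≤ 0} : ℝ) : EReal) ≤ max (f x) 0) :
    ∀ x : X, x ∉ {y : X | f y ≤ 0} → sphInf f x ≤ ((-τ : ℝ) : EReal) := by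
  intro x hxmem
  simp only [Set.mem_setOf_eq, not_le] at hxmem
  set S := {y : X | f y ≤ 0} with hSdef
  have hSclosed : IsClosed S := by
    rw [← isOpen_compl_iff, isOpen_iff_mem_nhds]
    intro y hy
    simp only [Set.mem_compl_iff, hSdef, Set.mem_setOf_eq, not_le] at hy
    filter_upwards [hlsc y 0 hy] with z hz
    simpa [hSdef] using hz
  have hd : 0 < Metric.infDist x S := by
    rw [← hSclosed.notMem_iff_infDist_pos hS]
    simpa [hSdef] using hxmem.not_ge
  set d := Metric.infDist x S with hddef
  have key : ∀ c : ℝ, -τ < c → c < 0 → sphInf f x ≤ (c : EReal) := by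
    intro c hc1 hc0
    have hnc : 0 < -c := by linarith
    have hdlt : d < τ * d / (-c) := by
      rw [lt_div_iff₀ hnc]
      nlinarith
    obtain ⟨z, hzS, hzlt⟩ := (Metric.infDist_lt_iff hS).mp hdlt
    set t := dist x z with htdef
    have hzx : z ≠ x := by
      intro h; rw [h] at hzS
      exact absurd hzS (hxmem.not_ge)
    have ht0 : 0 < t := dist_pos.mpr (Ne.symm hzx)
    have htd : d ≤ t := Metric.infDist_le_dist_of_mem hzS
    set h : X := t⁻¹ • (z - x) with hhdef
    have hnorm : ‖h‖ = 1 := by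
      rw [hhdef, norm_smul, norm_inv, Real.norm_eq_abs, abs_of_pos ht0]
      rw [htdef, dist_eq_norm, ← norm_sub_rev]
      exact inv_mul_cancel₀ (by rw [← dist_eq_norm, dist_comm, ← htdef]; exact ht0.ne')
    have hxz : x + t • h = z := by
      rw [hhdef, smul_smul, mul_inv_cancel₀ ht0.ne', one_smul, add_sub_cancel]
    have hfx : ((τ * d : ℝ) : EReal) ≤ f x := by
      have := heb x
      rwa [max_eq_left hxmem.le] at this
    have hfz : f z ≤ 0 := hzS
    have hstep : sphInf f x ≤ dquot f x h t := by
      refine le_trans (iInf_le _ (⟨h, hnorm⟩ : {h : X // ‖h‖ = 1})) ?_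
      exact iInf_le _ (⟨t, ht0⟩ : {t : ℝ // 0 < t})
    refine hstep.trans ?_
    rw [dquot, hxz]
    rcases eq_or_ne (f x) ⊤ with hT | hT
    · rw [hT, EReal.sub_top, EReal.coe_mul_bot_of_pos (by positivity)]
      exact bot_le
    · lift f x to ℝ using ⟨hT, hproper.2 x⟩ with r hr
      have hfzT : f z ≠ ⊤ := (hfz.trans_lt (by norm_num)).ne
      lift f z to ℝ using ⟨hfzT, hproper.2 z⟩ with s hs
      have hsle : s ≤ 0 := by exact_mod_cast hfz
      have hrge : τ * d ≤ r := by exact_mod_cast hfx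
      have hct : t * (-c) < τ * d := (lt_div_iff₀ hnc).mp hzlt
      have hreal : t⁻¹ * (s - r) ≤ c := by
        rw [inv_mul_eq_div, div_le_iff₀ ht0]
        nlinarith
      calc ((t⁻¹ : ℝ) : EReal) * ((s : EReal) - (r : EReal))
          = ((t⁻¹ * (s - r) : ℝ) : EReal) := by
            rw [← EReal.coe_sub, ← EReal.coe_mul]
        _ ≤ (c : EReal) := by exact_mod_cast hreal
  refine le_of_forall_gt_imp_ge_of_dense ?_
  intro b hb
  have hmin : ((-τ : ℝ) : EReal) < min b 0 := by
    refine lt_min hb ?_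
    exact_mod_cast neg_lt_zero.mpr hτ
  obtain ⟨c, hc1, hc2⟩ := EReal.exists_between_coe_real hmin
  have hc0 : c < 0 := by
    have : (c : EReal) < ((0 : ℝ) : EReal) := by
      simpa using hc2.trans_le (min_le_right _ _)
    exact_mod_cast this
  have hcb : (c : EReal) ≤ b := (hc2.trans_le (min_le_left _ _)).le
  exact (key c (by exact_mod_cast hc1) hc0).trans hcb
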